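/- For n ≥ 2, the minimal height of the Kuhn simplex T̂ ⊂ ℝ^n equals 1/√2; more precisely, the heights over the hyperfaces opposite to v₀ and v_n equal 1, and the heights over the hyperfaces opposite to v_i for 1 ≤ i ≤ n−1 equal 1/√2. -/

import Mathlib

open Metric Set
open scoped RealInnerProductSpace

/-- Diameter of the largest closed ball inscribed in `S`. -/
noncomputable def inDiam {n : ℕ} (S : Set (EuclideanSpace ℝ (Fin n))) : ℝ :=
  2 * sSup {r : ℝ | 0 ≤ r ∧ ∃ c, Metric.closedBall c r ⊆ S}

/-- Diameter of the smallest closed ball containing `S`. -/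
noncomputable def circumDiam {n : ℕ} (S : Set (EuclideanSpace ℝ (Fin n))) : ℝ :=
  2 * sInf {r : ℝ | 0 ≤ r ∧ ∃ c, S ⊆ Metric.closedBall c r}

/-- Shape regularity `γ(S) = R(S)/r(S)`. -/
noncomputable def shapeReg {n : ℕ} (S : Set (EuclideanSpace ℝ (Fin n))) : ℝ :=
  circumDiam S / inDiam S

/-- Height of the simplex with vertices `v` over the hyperface opposite vertex `i`. -/
noncomputable def simplexHeight {n : ℕ} (v : Fin (n + 1) → EuclideanSpace ℝ (Fin n))
    (i : Fin (n + 1)) : ℝ :=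
  sSup ((fun x => Metric.infDist x (convexHull ℝ (v '' {i}ᶜ))) ''
    convexHull ℝ (Set.range v))

/-- Minimal height of the simplex with vertices `v`. -/
noncomputable def minHeight {n : ℕ} (v : Fin (n + 1) → EuclideanSpace ℝ (Fin n)) : ℝ :=
  ⨅ i, simplexHeight v i

/-- The `k`-th vertex of the Kuhn simplex, `v_k = e_1 + ⋯ + e_k`. -/
noncomputable def kuhnVertex (n : ℕ) (k : Fin (n + 1)) : EuclideanSpace ℝ (Fin n) :=
  (WithLp.equiv 2 (Fin n → ℝ)).symm fun i => if (i : ℕ) < (k : ℕ) then 1 else 0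

/-- The Kuhn simplex `conv{0, e₁, e₁+e₂, …, e₁+⋯+e_n} ⊂ ℝⁿ`. -/
noncomputable def kuhnSimplex (n : ℕ) : Set (EuclideanSpace ℝ (Fin n)) :=
  convexHull ℝ (Set.range (kuhnVertex n))

lemma kuhnVertex_apply (n : ℕ) (k : Fin (n + 1)) (j : Fin n) :
    kuhnVertex n k j = if (j : ℕ) < (k : ℕ) then 1 else 0 := rfl

lemma convexOn_infDist' {n : ℕ} (F : Set (EuclideanSpace ℝ (Fin n))) (hF : Convex ℝ F)
    (hne : F.Nonempty) : ConvexOn ℝ univ (fun x => infDist x F) := by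
  refine ⟨convex_univ, fun x _ y _ a b ha hb hab => ?_⟩
  refine le_of_forall_pos_le_add fun ε hε => ?_
  obtain ⟨px, hpx, hdx⟩ := (infDist_lt_iff hne).1
    (show infDist x F < infDist x F + ε / 2 by linarith)
  obtain ⟨py, hpy, hdy⟩ := (infDist_lt_iff hne).1
    (show infDist y F < infDist y F + ε / 2 by linarith)
  have hmem : a • px + b • py ∈ F := hF hpx hpy ha hb hab
  have h1 : infDist (a • x + b • y) F ≤ dist (a • x + b • y) (a • px + b • py) :=
    infDist_le_dist_of_mem hmem
  have h2 : dist (a • x + b • y) (a • px + b • py) ≤ a * dist x px + b * dist y py := by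
    calc dist (a • x + b • y) (a • px + b • py)
        = ‖a • (x - px) + b • (y - py)‖ := by rw [dist_eq_norm]; congr 1; module
      _ ≤ ‖a • (x - px)‖ + ‖b • (y - py)‖ := norm_add_le _ _
      _ = a * dist x px + b * dist y py := by
          rw [norm_smul, norm_smul, Real.norm_of_nonneg ha, Real.norm_of_nonneg hb,
            dist_eq_norm, dist_eq_norm]
  have h3 := mul_le_mul_of_nonneg_left hdx.le ha
  have h4 := mul_le_mul_of_nonneg_left hdy.le hb
  simp only [smul_eq_mul]
  nlinarith [h1.trans h2]

lemma le_infDist' {n : ℕ} {F : Set (EuclideanSpace ℝ (Fin n))} (hne : F.Nonempty)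
    {x : EuclideanSpace ℝ (Fin n)} {b : ℝ} (h : ∀ y ∈ F, b ≤ dist x y) :
    b ≤ infDist x F := by
  by_contra hlt
  obtain ⟨y, hy, hd⟩ := (infDist_lt_iff hne).1 (lt_of_not_ge hlt)
  exact absurd (h y hy) (not_le.2 hd)

/-- The height over face `i` equals the distance from vertex `i` to the opposite face. -/
lemma simplexHeight_eq {n : ℕ} (v : Fin (n + 1) → EuclideanSpace ℝ (Fin n))
    (i : Fin (n + 1)) (hne : (v '' {i}ᶜ).Nonempty) :
    simplexHeight v i = infDist (v i) (convexHull ℝ (v '' {i}ᶜ)) := by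
  set F := convexHull ℝ (v '' {i}ᶜ) with hF
  have hFne : F.Nonempty := hne.mono (subset_convexHull ℝ _)
  have hconv := convexOn_infDist' F (convex_convexHull ℝ _) hFne
  apply IsGreatest.csSup_eq
  constructor
  · exact ⟨v i, subset_convexHull ℝ _ (mem_range_self i), rfl⟩
  · rintro r ⟨x, hx, rfl⟩
    obtain ⟨y, ⟨k, rfl⟩, hle⟩ := hconv.exists_ge_of_mem_convexHull (subset_univ _) hx
    by_cases hk : k = i
    · subst hk; exact hle
    · have hmem : v k ∈ F := subset_convexHull ℝ _ ⟨k, hk, rfl⟩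
      rw [infDist_zero_of_mem hmem] at hle
      exact hle.trans infDist_nonneg

/-- Exact computation of distance to a convex hull via a supporting linear functional. -/
lemma infDist_hull_eq {n : ℕ} {s : Set (EuclideanSpace ℝ (Fin n))}
    {a x y₀ : EuclideanSpace ℝ (Fin n)} {c : ℝ} (ha : a ≠ 0)
    (hy₀ : y₀ ∈ convexHull ℝ s) (hc : ∀ y ∈ s, ⟪a, y⟫ = c)
    (hx : ⟪a, x⟫ - c = ‖a‖ * dist x y₀) :
    infDist x (convexHull ℝ s) = dist x y₀ := by
  refine le_antisymm (infDist_le_dist_of_mem hy₀) (le_infDist' ⟨y₀, hy₀⟩ ?_)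
  intro y hy
  have hcy : ⟪a, y⟫ = c := by
    have hconv : Convex ℝ {w : EuclideanSpace ℝ (Fin n) | ⟪a, w⟫ = c} :=
      convex_hyperplane ⟨fun u w => inner_add_right a u w,
        fun r u => real_inner_smul_right a u r⟩ c
    exact convexHull_min hc hconv hy
  have h1 : ⟪a, x - y⟫ ≤ ‖a‖ * ‖x - y‖ := real_inner_le_norm a (x - y)
  have h2 : ⟪a, x - y⟫ = ‖a‖ * dist x y₀ := by
    rw [inner_sub_right, hcy]; exact hx
  have hapos : (0 : ℝ) < ‖a‖ := norm_pos_iff.2 ha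
  refine le_of_mul_le_mul_left ?_ hapos
  rw [← h2, dist_eq_norm]
  exact h1

/-- For n ≥ 2, the heights of the Kuhn simplex over the faces opposite v₀ and v_n equal 1,
those opposite v_i (1 ≤ i ≤ n−1) equal 1/√2, and the minimal height equals 1/√2. -/
theorem kuhn_heights (n : ℕ) (hn : 2 ≤ n) :
    simplexHeight (kuhnVertex n) 0 = 1 ∧
    simplexHeight (kuhnVertex n) (Fin.last n) = 1 ∧
    (∀ i : Fin (n + 1), 1 ≤ (i : ℕ) → (i : ℕ) ≤ n - 1 →
      simplexHeight (kuhnVertex n) i = 1 / Real.sqrt 2) ∧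
    minHeight (kuhnVertex n) = 1 / Real.sqrt 2 := by
  have hn0 : 0 < n := by omega
  set v := kuhnVertex n with hv
  -- distance formula helper
  have hdist : ∀ x y : EuclideanSpace ℝ (Fin n),
      dist x y = Real.sqrt (∑ j, (x j - y j) ^ 2) := by
    intro x y
    rw [EuclideanSpace.dist_eq]
    congr 1
    exact Finset.sum_congr rfl fun j _ => by rw [Real.dist_eq, sq_abs]
  -- Face opposite v₀ has height 1
  have h0 : simplexHeight v 0 = 1 := by
    have hmem1 : v ⟨1, by omega⟩ ∈ v '' {(0 : Fin (n+1))}ᶜ :=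
      ⟨⟨1, by omega⟩, by simp [Fin.ext_iff], rfl⟩
    rw [simplexHeight_eq v 0 ⟨_, hmem1⟩]
    set j0 : Fin n := ⟨0, hn0⟩ with hj0
    set a : EuclideanSpace ℝ (Fin n) := -(EuclideanSpace.single j0 (1:ℝ)) with haa
    have hanorm : ‖a‖ = 1 := by
      rw [haa, norm_neg, EuclideanSpace.norm_single, norm_one]
    have hane : a ≠ 0 := fun h => by rw [h, norm_zero] at hanorm; norm_num at hanorm
    have hd : dist (v 0) (v ⟨1, by omega⟩) = 1 := by
      rw [hdist]
      have : ∀ j : Fin n, ((v 0) j - (v ⟨1, by omega⟩) j) ^ 2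
          = if j = j0 then (1:ℝ) else 0 := by
        intro j
        rw [hv, kuhnVertex_apply, kuhnVertex_apply]
        simp only [Fin.val_zero, Fin.ext_iff, hj0]
        split_ifs <;> (try omega) <;> norm_num
      rw [Finset.sum_congr rfl fun j _ => this j, Finset.sum_ite_eq']
      simp
    refine (infDist_hull_eq (c := -1) hane (subset_convexHull ℝ _ hmem1) ?_ ?_).trans hd
    · rintro y ⟨k, hk, rfl⟩
      have hk' : (k : ℕ) ≠ 0 := fun h => hk (Fin.ext h)
      rw [haa, inner_neg_left, real_inner_comm, EuclideanSpace.inner_single_right]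
      rw [hv, kuhnVertex_apply]
      simp only [hj0]
      rw [if_pos (by omega)]
      norm_num
    · rw [haa, inner_neg_left, real_inner_comm, EuclideanSpace.inner_single_right]
      rw [hv, kuhnVertex_apply, hanorm, hd]
      simp
  -- Face opposite v_n has height 1
  have hlast : simplexHeight v (Fin.last n) = 1 := by
    have hmem1 : v ⟨n - 1, by omega⟩ ∈ v '' {Fin.last n}ᶜ :=
      ⟨⟨n - 1, by omega⟩, by simp [Fin.ext_iff, Fin.last]; omega, rfl⟩
    rw [simplexHeight_eq v (Fin.last n) ⟨_, hmem1⟩]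
    set j0 : Fin n := ⟨n - 1, by omega⟩ with hj0
    set a : EuclideanSpace ℝ (Fin n) := EuclideanSpace.single j0 (1:ℝ) with haa
    have hanorm : ‖a‖ = 1 := by rw [haa, EuclideanSpace.norm_single, norm_one]
    have hane : a ≠ 0 := fun h => by rw [h, norm_zero] at hanorm; norm_num at hanorm
    have hd : dist (v (Fin.last n)) (v ⟨n - 1, by omega⟩) = 1 := by
      rw [hdist]
      have : ∀ j : Fin n, ((v (Fin.last n)) j - (v ⟨n - 1, by omega⟩) j) ^ 2
          = if j = j0 then (1:ℝ) else 0 := by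
        intro j
        rw [hv, kuhnVertex_apply, kuhnVertex_apply]
        have hjlt := j.isLt
        simp only [Fin.val_last, Fin.ext_iff, hj0]
        split_ifs <;> (try omega) <;> norm_num
      rw [Finset.sum_congr rfl fun j _ => this j, Finset.sum_ite_eq']
      simp
    refine (infDist_hull_eq (c := 0) hane (subset_convexHull ℝ _ hmem1) ?_ ?_).trans hd
    · rintro y ⟨k, hk, rfl⟩
      have hk' : (k : ℕ) ≠ n := fun h => hk (by simp [Fin.ext_iff, Fin.last, h])
      have hk2 := k.isLt
      rw [haa, real_inner_comm, EuclideanSpace.inner_single_right]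
      rw [hv, kuhnVertex_apply]
      simp only [hj0]
      rw [if_neg (by omega)]
      norm_num
    · rw [haa, real_inner_comm, EuclideanSpace.inner_single_right]
      rw [hv, kuhnVertex_apply, hanorm, hd]
      simp only [hj0, Fin.val_last]
      rw [if_pos (by omega)]
      norm_num
  -- Middle faces have height 1/√2
  have hmid : ∀ i : Fin (n + 1), 1 ≤ (i : ℕ) → (i : ℕ) ≤ n - 1 →
      simplexHeight v i = 1 / Real.sqrt 2 := by
    intro i h1 h2
    set m := (i : ℕ) with hm
    have hmn : m ≤ n - 1 := h2
    have hm1 : 1 ≤ m := h1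
    have hmlt : m < n := by omega
    -- face vertices adjacent to i
    have hmemA : v ⟨m - 1, by omega⟩ ∈ v '' {i}ᶜ :=
      ⟨⟨m - 1, by omega⟩, by simp only [Set.mem_compl_iff, Set.mem_singleton_iff, Fin.ext_iff]; omega, rfl⟩
    have hmemB : v ⟨m + 1, by omega⟩ ∈ v '' {i}ᶜ :=
      ⟨⟨m + 1, by omega⟩, by simp only [Set.mem_compl_iff, Set.mem_singleton_iff, Fin.ext_iff]; omega, rfl⟩
    rw [simplexHeight_eq v i ⟨_, hmemA⟩]
    set j1 : Fin n := ⟨m - 1, by omega⟩ with hj1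
    set j2 : Fin n := ⟨m, by omega⟩ with hj2
    set a : EuclideanSpace ℝ (Fin n) :=
      EuclideanSpace.single j1 (1:ℝ) - EuclideanSpace.single j2 (1:ℝ) with haa
    have hj12 : j1 ≠ j2 := by simp only [ne_eq, Fin.ext_iff, hj1, hj2]; omega
    have hinner : ∀ w : EuclideanSpace ℝ (Fin n), ⟪a, w⟫ = w j1 - w j2 := by
      intro w
      rw [haa, inner_sub_left, real_inner_comm, EuclideanSpace.inner_single_right,
        real_inner_comm, EuclideanSpace.inner_single_right]
      norm_num
    have hanorm : ‖a‖ = Real.sqrt 2 := by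
      rw [EuclideanSpace.norm_eq]
      congr 1
      have : ∀ j : Fin n, ‖a j‖ ^ 2
          = (if j = j1 then (1:ℝ) else 0) + (if j = j2 then (1:ℝ) else 0) := by
        intro j
        have : a j = (if j = j1 then (1:ℝ) else 0) - (if j = j2 then (1:ℝ) else 0) := by
          rw [haa]
          simp [EuclideanSpace.single_apply, eq_comm]
        rw [this]
        by_cases e1 : j = j1 <;> by_cases e2 : j = j2 <;>
          simp [e1, e2, hj12, hj12.symm, Real.norm_eq_abs]
      rw [Finset.sum_congr rfl fun j _ => this j, Finset.sum_add_distrib,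
        Finset.sum_ite_eq', Finset.sum_ite_eq']
      norm_num
    have hane : a ≠ 0 := fun h => by
      rw [h, norm_zero] at hanorm
      have : (0:ℝ) < Real.sqrt 2 := by positivity
      rw [← hanorm] at this; exact lt_irrefl _ this
    -- the foot point: midpoint of v (i-1) and v (i+1)
    set y₀ : EuclideanSpace ℝ (Fin n) :=
      (1/2 : ℝ) • v ⟨m - 1, by omega⟩ + (1/2 : ℝ) • v ⟨m + 1, by omega⟩ with hy₀
    have hy₀mem : y₀ ∈ convexHull ℝ (v '' {i}ᶜ) :=
      (convex_convexHull ℝ _) (subset_convexHull ℝ _ hmemA) (subset_convexHull ℝ _ hmemB)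
        (by norm_num) (by norm_num) (by norm_num)
    have hy₀j : ∀ j : Fin n, y₀ j
        = ((if (j:ℕ) < m - 1 then (1:ℝ) else 0) + (if (j:ℕ) < m + 1 then (1:ℝ) else 0)) / 2 := by
      intro j
      rw [hy₀]
      simp only [PiLp.add_apply, PiLp.smul_apply, smul_eq_mul, hv, kuhnVertex_apply]
      ring
    have hd : dist (v i) y₀ = Real.sqrt (1/2) := by
      rw [hdist]
      congr 1
      have : ∀ j : Fin n, ((v i) j - y₀ j) ^ 2
          = (if j = j1 then (1/4:ℝ) else 0) + (if j = j2 then (1/4:ℝ) else 0) := by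
        intro j
        rw [hy₀j j, hv, kuhnVertex_apply, ← hm]
        simp only [Fin.ext_iff, hj1, hj2]
        split_ifs <;> (try omega) <;> norm_num
      rw [Finset.sum_congr rfl fun j _ => this j, Finset.sum_add_distrib,
        Finset.sum_ite_eq', Finset.sum_ite_eq']
      norm_num
    have key : infDist (v i) (convexHull ℝ (v '' {i}ᶜ)) = dist (v i) y₀ := by
      refine infDist_hull_eq (c := 0) hane hy₀mem ?_ ?_
      · rintro y ⟨k, hk, rfl⟩
        have hk' : (k : ℕ) ≠ m := fun h => hk (Fin.ext h)
        rw [hinner, hv, kuhnVertex_apply, kuhnVertex_apply]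
        simp only [hj1, hj2]
        by_cases hlt : (k:ℕ) < m
        · rw [if_neg (by omega), if_neg (by omega)]; norm_num
        · rw [if_pos (by omega), if_pos (by omega)]; norm_num
      · rw [hinner, hv, kuhnVertex_apply, kuhnVertex_apply, hanorm, hd]
        simp only [hj1, hj2, ← hm]
        rw [if_pos (by omega), if_neg (by omega)]
        rw [← Real.sqrt_mul (by norm_num)]
        norm_num
    rw [key, hd, show (1:ℝ)/2 = 2⁻¹ from by norm_num, Real.sqrt_inv, one_div]
  refine ⟨h0, hlast, hmid, ?_⟩
  -- minimal height
  have hsq2 : (1 : ℝ) ≤ Real.sqrt 2 := by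
    rw [show (1 : ℝ) = Real.sqrt 1 by simp]
    exact Real.sqrt_le_sqrt (by norm_num)
  have hsqpos : (0 : ℝ) < Real.sqrt 2 := by positivity
  have hb : ∀ i, 1 / Real.sqrt 2 ≤ simplexHeight v i := by
    intro i
    by_cases hi0 : i = 0
    · rw [hi0, h0]; rw [div_le_one hsqpos] at *; linarith
    · by_cases hil : i = Fin.last n
      · rw [hil, hlast]; rw [div_le_one hsqpos] at *; linarith
      · have h1 : 1 ≤ (i : ℕ) := by
          rcases Nat.eq_zero_or_pos (i : ℕ) with h | h
          · exact absurd (Fin.ext h) hi0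
          · exact h
        have h2 : (i : ℕ) ≤ n - 1 := by
          have := i.isLt
          have : (i : ℕ) ≠ n := fun h => hil (Fin.ext (by simp [h]))
          omega
        rw [hmid i h1 h2]
  unfold minHeight
  refine le_antisymm ?_ (le_ciInf hb)
  have h := ciInf_le (f := fun i => simplexHeight v i)
    ((Set.finite_range _).bddBelow) (⟨1, by omega⟩ : Fin (n + 1))
  rw [hmid ⟨1, by omega⟩ (by simp) (by simp; omega)] at h
  exact h
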